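/- arXiv:1111.5167 — 3 statements merged into one kernel-verified Lean document; each statement's English description precedes it below -/
import Mathlib

section
/- Let p ∈ P_j(r2) be nonzero. If p has two distinct zeroes λ₁ ≠ λ₂ with |λ₁| = |λ₂|, then every λ ∈ ℂ with |λ| = |λ₁| is a zero of p. -/
/-- Evaluation of the polyanalytic polynomial in `P_j(r2)` with coefficients `α`
(supported in `{0,…,j}`):  `p(λ) = ∑_{k=0}^{⌊j/2⌋} (α_{2k} + α_{2k+1} λ)|λ|^{2k}`. -/
noncomputable def evalR2 (j : ℕ) (α : ℕ → ℂ) (z : ℂ) : ℂ :=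
  ∑ k ∈ Finset.range (j / 2 + 1), (α (2 * k) + α (2 * k + 1) * z) * ((‖z‖ : ℂ)) ^ (2 * k)

/-- If a nonzero `p ∈ P_j(r2)` has two distinct zeroes of the same modulus, then every
number of that modulus is a zero of `p`. -/
theorem zeros_full_circle (j : ℕ) (α : ℕ → ℂ) (hsupp : ∀ k, j < k → α k = 0)
    (hp : ∃ z, evalR2 j α z ≠ 0)
    (l₁ l₂ : ℂ) (hne : l₁ ≠ l₂) (habs : ‖l₁‖ = ‖l₂‖)
    (h₁ : evalR2 j α l₁ = 0) (h₂ : evalR2 j α l₂ = 0) :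
    ∀ l : ℂ, ‖l‖ = ‖l₁‖ → evalR2 j α l = 0 := by
  intro l hl
  have key : ∀ z : ℂ, evalR2 j α z =
      (∑ k ∈ Finset.range (j / 2 + 1), α (2 * k) * ((‖z‖ : ℂ)) ^ (2 * k)) +
      (∑ k ∈ Finset.range (j / 2 + 1), α (2 * k + 1) * ((‖z‖ : ℂ)) ^ (2 * k)) * z := by
    intro z
    unfold evalR2
    rw [Finset.sum_mul, ← Finset.sum_add_distrib]
    exact Finset.sum_congr rfl fun k _ => by ring
  set A := ∑ k ∈ Finset.range (j / 2 + 1), α (2 * k) * ((‖l₁‖ : ℂ)) ^ (2 * k) with hA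
  set B := ∑ k ∈ Finset.range (j / 2 + 1), α (2 * k + 1) * ((‖l₁‖ : ℂ)) ^ (2 * k) with hB
  have e₁ : A + B * l₁ = 0 := by rw [← key l₁]; exact h₁
  have e₂ : A + B * l₂ = 0 := by
    rw [hA, hB, habs, ← key l₂]; exact h₂
  have hBz : B = 0 := by
    have : B * (l₁ - l₂) = 0 := by linear_combination e₁ - e₂
    rcases mul_eq_zero.mp this with h | h
    · exact h
    · exact absurd (sub_eq_zero.mp h) hne
  have hAz : A = 0 := by simpa [hBz] using e₁
  rw [key l, hl]
  rw [← hA, ← hB, hAz, hBz]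
  ring
end

section
/- Let γ ⊂ ℂ be a compact simple curve, either open (the image of an injective continuous map from [0,1]) or closed (the image of an injective continuous map from the unit circle), such that γ intersects every circle centred at the origin in at most two points. Let f : γ → ℂ be continuous and let ε > 0. Then there exists a polynomial p ∈ P(r2) such that max over z ∈ γ of |f(z) − p(z)| < ε. -/
open Set Metric Polynomial in
private 
lemma affine_on_two (s : Set ℂ) (h : s.encard ≤ 2) (f : ℂ → ℂ) :
    ∃ a b : ℂ, ∀ z ∈ s, f z = a + b * z := by
  rcases le_or_gt s.encard 1 with h1 | h1
  · rw [Set.encard_le_one_iff_eq] at h1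
    rcases h1 with rfl | ⟨x, rfl⟩
    · exact ⟨0, 0, by simp⟩
    · exact ⟨f x, 0, by simp⟩
  · have h2 : s.encard = 2 := le_antisymm h (Order.add_one_le_of_lt h1)
    rw [Set.encard_eq_two] at h2
    obtain ⟨x, y, hxy, rfl⟩ := h2
    refine ⟨f x - (f y - f x) / (y - x) * x, (f y - f x) / (y - x), ?_⟩
    have hyx : y - x ≠ 0 := sub_ne_zero.2 (Ne.symm hxy)
    rintro z (rfl | rfl)
    · ring
    · field_simp
      ring

open Set Metric Polynomial in
private 
lemma delta_lemma (γ : Set ℂ) (hc : IsCompact γ) (f : ℂ → ℂ) (hf : ContinuousOn f γ)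
    (ε : ℝ) (hε : 0 < ε) (r : ℝ) (a b : ℂ)
    (hab : ∀ z ∈ γ, ‖z‖ = r → f z = a + b * z) :
    ∃ δ > 0, ∀ z ∈ γ, |‖z‖ - r| < δ →
      ‖f z - (a + b * z)‖ < ε := by
  set g : ℂ → ℝ := fun z => ‖f z - (a + b * z)‖ with hg
  have hgc : ContinuousOn g γ := by
    apply continuous_norm.comp_continuousOn
    exact hf.sub ((continuous_const.add (continuous_const.mul continuous_id)).continuousOn)
  set K : Set ℂ := γ ∩ g ⁻¹' (Ici ε) with hK
  have hKc : IsCompact K :=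
    hc.of_isClosed_subset (hgc.preimage_isClosed_of_isClosed hc.isClosed isClosed_Ici)
      Set.inter_subset_left
  rcases K.eq_empty_or_nonempty with hKe | hKne
  · refine ⟨1, one_pos, fun z hz _ => ?_⟩
    by_contra hcon
    have : z ∈ K := ⟨hz, not_lt.1 hcon⟩
    simp [hKe] at this
  · obtain ⟨z₀, hz₀K, hmin⟩ := hKc.exists_isMinOn hKne
      ((continuous_abs.comp (continuous_norm.sub continuous_const)).continuousOn)
    refine ⟨|‖z₀‖ - r|, ?_, fun z hz hlt => ?_⟩
    · rcases (abs_nonneg (‖z₀‖ - r)).lt_or_eq with h | h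
      · exact h
      · exfalso
        have h0 : ‖z₀‖ = r := by
          have := abs_eq_zero.1 h.symm; linarith [sub_eq_zero.1 this]
        have := hz₀K.2
        simp only [Set.mem_preimage, Set.mem_Ici, hg] at this
        rw [hab z₀ hz₀K.1 h0] at this
        simp at this
        linarith
    · by_contra hcon
      have hzK : z ∈ K := ⟨hz, not_lt.1 hcon⟩
      have := hmin hzK
      simp only at this
      exact absurd hlt (not_lt.2 this)

open Set Metric Polynomial in
private lemma step_b (γ : Set ℂ) (hc : IsCompact γ) (hne : γ.Nonempty)
    (hcirc : ∀ r : ℝ, ({z ∈ γ | ‖z‖ = r}).encard ≤ 2)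
    (f : ℂ → ℂ) (hf : ContinuousOn f γ) (ε : ℝ) (hε : 0 < ε) :
    ∃ G H : ℝ → ℂ, Continuous G ∧ Continuous H ∧
      ∀ z ∈ γ, ‖f z - (G (‖z‖) + H (‖z‖) * z)‖ ≤ ε := by
  -- affine interpolants on each fiber
  have h1 : ∀ r : ℝ, ∃ a b : ℂ, ∀ z ∈ γ, ‖z‖ = r → f z = a + b * z := by
    intro r
    obtain ⟨a, b, hab⟩ := affine_on_two {z ∈ γ | ‖z‖ = r} (hcirc r) f
    exact ⟨a, b, fun z hz hr => hab z ⟨hz, hr⟩⟩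
  choose a b hab using h1
  have h2 : ∀ r : ℝ, ∃ δ > 0, ∀ z ∈ γ, |‖z‖ - r| < δ →
      ‖f z - (a r + b r * z)‖ < ε :=
    fun r => delta_lemma γ hc f hf ε hε r (a r) (b r) (hab r)
  choose δ hδpos hδ using h2
  -- compact set of radii
  set R : Set ℝ := (fun z : ℂ => ‖z‖) '' γ with hR
  have hRc : IsCompact R := hc.image continuous_norm
  have hRne : R.Nonempty := hne.image _
  -- finite subcover
  obtain ⟨t, ht⟩ := hRc.elim_finite_subcover (fun r : ℝ => Metric.ball r (δ r))
    (fun r => isOpen_ball) (fun x _ => Set.mem_iUnion.2 ⟨x, mem_ball_self (hδpos x)⟩)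
  -- partition functions
  set ψ : ℝ → ℝ → ℝ := fun i x => max (δ i - |x - i|) 0 with hψ
  have hψc : ∀ i, Continuous (ψ i) := fun i =>
    ((continuous_const.sub (continuous_abs.comp (continuous_id.sub continuous_const))).max
      continuous_const)
  have hψnn : ∀ i x, 0 ≤ ψ i x := fun i x => le_max_right _ _
  have hψpos : ∀ i x, x ∈ Metric.ball i (δ i) → 0 < ψ i x := by
    intro i x hx
    rw [Metric.mem_ball, Real.dist_eq] at hx
    exact lt_max_of_lt_left (by linarith)
  have hψsupp : ∀ i x, 0 < ψ i x → |x - i| < δ i := by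
    intro i x hx
    rcases lt_or_ge (|x - i|) (δ i) with h | h
    · exact h
    · exfalso; rw [hψ] at hx; simp only [max_lt_iff] at hx
      have : δ i - |x - i| ≤ 0 := by linarith
      rcases (max_eq_right this) with h2
      rw [h2] at hx; exact lt_irrefl 0 hx
  set s : ℝ → ℝ := fun x => ∑ i ∈ t, ψ i x with hs
  have hsc : Continuous s := continuous_finset_sum _ (fun i _ => hψc i)
  have hsnn : ∀ x, 0 ≤ s x := fun x => Finset.sum_nonneg (fun i _ => hψnn i x)
  have hsR : ∀ x ∈ R, 0 < s x := by
    intro x hx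
    obtain ⟨i, hit, hxi⟩ := Set.mem_iUnion₂.1 (ht hx)
    exact lt_of_lt_of_le (hψpos i x hxi)
      (Finset.single_le_sum (fun j _ => hψnn j x) hit)
  obtain ⟨x₀, hx₀R, hmin⟩ := hRc.exists_isMinOn hRne hsc.continuousOn
  set m₀ : ℝ := s x₀ with hm₀
  have hm₀pos : 0 < m₀ := hsR x₀ hx₀R
  set s' : ℝ → ℝ := fun x => max (s x) m₀ with hs'
  have hs'c : Continuous s' := hsc.max continuous_const
  have hs'pos : ∀ x, 0 < s' x := fun x => lt_of_lt_of_le hm₀pos (le_max_right _ _)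
  have hs'R : ∀ x ∈ R, s' x = s x := fun x hx => max_eq_left (hmin hx)
  set G : ℝ → ℂ := fun x => ∑ i ∈ t, ((ψ i x / s' x : ℝ) : ℂ) * a i with hG
  set H : ℝ → ℂ := fun x => ∑ i ∈ t, ((ψ i x / s' x : ℝ) : ℂ) * b i with hH
  have hcont : ∀ (c : ℝ → ℂ), Continuous (fun x => ∑ i ∈ t, ((ψ i x / s' x : ℝ) : ℂ) * c i) := by
    intro c
    refine continuous_finset_sum _ (fun i _ => ?_)
    exact (Complex.continuous_ofReal.comp ((hψc i).div hs'c (fun x => (hs'pos x).ne'))).mul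
      continuous_const
  refine ⟨G, H, hcont a, hcont b, fun z hz => ?_⟩
  set x : ℝ := ‖z‖ with hx
  have hxR : x ∈ R := ⟨z, hz, rfl⟩
  have hsum1 : (∑ i ∈ t, (ψ i x / s' x)) = 1 := by
    rw [← Finset.sum_div, hs'R x hxR]
    exact div_self (hsR x hxR).ne'
  have key : f z - (G x + H x * z) = ∑ i ∈ t, ((ψ i x / s' x : ℝ) : ℂ) * (f z - (a i + b i * z)) := by
    have h1 : f z = ∑ i ∈ t, ((ψ i x / s' x : ℝ) : ℂ) * f z := by
      rw [← Finset.sum_mul, ← Complex.ofReal_sum, hsum1, Complex.ofReal_one, one_mul]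
    have h2 : G x + H x * z = ∑ i ∈ t, ((ψ i x / s' x : ℝ) : ℂ) * (a i + b i * z) := by
      simp only [hG, hH, Finset.sum_mul]
      rw [← Finset.sum_add_distrib]
      exact Finset.sum_congr rfl (fun i _ => by ring)
    conv_lhs => rw [h1, h2]
    rw [← Finset.sum_sub_distrib]
    exact Finset.sum_congr rfl (fun i _ => by ring)
  calc ‖f z - (G x + H x * z)‖
      ≤ ∑ i ∈ t, ‖((ψ i x / s' x : ℝ) : ℂ) * (f z - (a i + b i * z))‖ := by
        rw [key]; exact norm_sum_le _ _
    _ ≤ ∑ i ∈ t, (ψ i x / s' x) * ε := by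
        apply Finset.sum_le_sum
        intro i _
        rw [norm_mul, Complex.norm_real, Real.norm_eq_abs,
          abs_of_nonneg (div_nonneg (hψnn i x) (hs'pos x).le)]
        rcases (hψnn i x).lt_or_eq with hpos | h0
        · apply mul_le_mul_of_nonneg_left _ (div_nonneg (hψnn i x) (hs'pos x).le)
          exact (hδ i z hz (hψsupp i x hpos)).le
        · rw [← h0]; simp
    _ = ε := by rw [← Finset.sum_mul, hsum1, one_mul]

open Set Metric Polynomial in
private -- complex-valued Weierstrass on [0,B]
lemma cx_weierstrass (B : ℝ) (G : ℝ → ℂ) (hG : Continuous G) (ε : ℝ) (hε : 0 < ε) :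
    ∃ P : Polynomial ℂ, ∀ t ∈ Set.Icc (0:ℝ) B,
      ‖G (Real.sqrt t) - P.eval (t : ℂ)‖ < ε := by
  have hc : Continuous fun t : ℝ => G (Real.sqrt t) := hG.comp Real.continuous_sqrt
  obtain ⟨P₁, hP₁⟩ := exists_polynomial_near_of_continuousOn 0 B
    (fun t => (G (Real.sqrt t)).re) (Complex.continuous_re.comp hc).continuousOn
    (ε/2) (by linarith)
  obtain ⟨P₂, hP₂⟩ := exists_polynomial_near_of_continuousOn 0 B
    (fun t => (G (Real.sqrt t)).im) (Complex.continuous_im.comp hc).continuousOn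
    (ε/2) (by linarith)
  refine ⟨P₁.map (algebraMap ℝ ℂ) + Polynomial.C Complex.I * P₂.map (algebraMap ℝ ℂ),
    fun t ht => ?_⟩
  have heval : ∀ (p : Polynomial ℝ), (p.map (algebraMap ℝ ℂ)).eval (t : ℂ) = ((p.eval t : ℝ) : ℂ) := by
    intro p
    rw [Polynomial.eval_map]
    exact Polynomial.eval₂_at_apply (algebraMap ℝ ℂ) t
  set w : ℂ := G (Real.sqrt t) - (P₁.map (algebraMap ℝ ℂ) + Polynomial.C Complex.I * P₂.map (algebraMap ℝ ℂ)).eval (t : ℂ) with hw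
  have hwre : w.re = (G (Real.sqrt t)).re - P₁.eval t := by
    simp [hw, heval, Complex.add_re, Complex.sub_re, Complex.mul_re]
  have hwim : w.im = (G (Real.sqrt t)).im - P₂.eval t := by
    simp [hw, heval, Complex.add_im, Complex.sub_im, Complex.mul_im]
  calc ‖w‖ ≤ |w.re| + |w.im| := Complex.norm_le_abs_re_add_abs_im w
    _ < ε/2 + ε/2 := by
        rw [hwre, hwim]
        have h1 := hP₁ t ht
        have h2 := hP₂ t ht
        rw [abs_sub_comm] at h1 h2
        exact add_lt_add h1 h2
    _ = ε := by ring

set_option maxHeartbeats 1000000 in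
open Set Metric Polynomial in
/-- Weierstrass-type approximation: on a compact simple (open or closed) curve `γ`
intersecting every origin-centred circle in at most two points, every continuous
function can be uniformly approximated by elements of `P(r2) = ⋃_j P_j(r2)`. -/
theorem weierstrass_r2 (γ : Set ℂ)
    (hγ : (∃ f : ℝ → ℂ, ContinuousOn f (Set.Icc 0 1) ∧ Set.InjOn f (Set.Icc 0 1) ∧
            γ = f '' Set.Icc 0 1) ∨
          (∃ f : ℂ → ℂ, ContinuousOn f (Metric.sphere (0 : ℂ) 1) ∧
            Set.InjOn f (Metric.sphere (0 : ℂ) 1) ∧ γ = f '' Metric.sphere (0 : ℂ) 1))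
    (hcirc : ∀ r : ℝ, ({z ∈ γ | ‖z‖ = r}).encard ≤ 2)
    (f : ℂ → ℂ) (hf : ContinuousOn f γ) (ε : ℝ) (hε : 0 < ε) :
    ∃ (j : ℕ) (α : ℕ → ℂ), (∀ k, j < k → α k = 0) ∧
      ∀ z ∈ γ, ‖f z - evalR2 j α z‖ < ε := by
  have hcomp : IsCompact γ := by
    rcases hγ with ⟨g, hgc, -, rfl⟩ | ⟨g, hgc, -, rfl⟩
    · exact isCompact_Icc.image_of_continuousOn hgc
    · exact (isCompact_sphere 0 1).image_of_continuousOn hgc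
  rcases γ.eq_empty_or_nonempty with rfl | hne
  · exact ⟨0, fun _ => 0, fun _ _ => rfl, fun z hz => absurd hz (by simp)⟩
  obtain ⟨G, H, hGc, hHc, hGH⟩ := step_b γ hcomp hne hcirc f hf (ε/4) (by linarith)
  -- bound on |z|
  obtain ⟨x₁, hx₁R, hmax⟩ := (hcomp.image continuous_norm).exists_isMaxOn
    (hne.image _) continuousOn_id
  set M : ℝ := x₁ with hMdef
  have hM : ∀ z ∈ γ, ‖z‖ ≤ M := fun z hz => hmax ⟨z, hz, rfl⟩
  have hM0 : 0 ≤ M := by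
    obtain ⟨z, hz, hze⟩ := hx₁R
    rw [← hze]; exact norm_nonneg z
  set B : ℝ := M^2 with hB
  obtain ⟨P, hP⟩ := cx_weierstrass B G hGc (ε/4) (by linarith)
  obtain ⟨Q, hQ⟩ := cx_weierstrass B H hHc (ε/(4*(M+1))) (by positivity)
  set n : ℕ := max P.natDegree Q.natDegree with hn
  set α : ℕ → ℂ := fun m => if m % 2 = 0 then P.coeff (m/2) else Q.coeff (m/2) with hα
  refine ⟨2*n+1, α, ?_, ?_⟩
  · intro k hk
    have hk2 : n + 1 ≤ k / 2 := by omega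
    have hP0 : P.coeff (k/2) = 0 := Polynomial.coeff_eq_zero_of_natDegree_lt
      (lt_of_lt_of_le (Nat.lt_succ_of_le (le_max_left _ _)) hk2)
    have hQ0 : Q.coeff (k/2) = 0 := Polynomial.coeff_eq_zero_of_natDegree_lt
      (lt_of_lt_of_le (Nat.lt_succ_of_le (le_max_right _ _)) hk2)
    simp only [hα]; split_ifs <;> assumption
  · intro z hz
    set x : ℝ := ‖z‖ with hx
    have hx0 : 0 ≤ x := norm_nonneg z
    set t : ℝ := x^2 with ht
    have htI : t ∈ Set.Icc (0:ℝ) B := ⟨sq_nonneg x, by rw [ht, hB]; exact pow_le_pow_left₀ hx0 (hM z hz) 2⟩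
    have hst : Real.sqrt t = x := Real.sqrt_sq hx0
    -- evaluate
    have heval : evalR2 (2*n+1) α z = P.eval (t : ℂ) + z * Q.eval (t : ℂ) := by
      have hdiv : (2*n+1)/2 = n := by omega
      have hwt : ∀ k : ℕ, ((x : ℂ)) ^ (2*k) = ((t : ℝ) : ℂ) ^ k := by
        intro k
        rw [ht, pow_mul]
        push_cast
        ring
      have hα1 : ∀ k : ℕ, α (2*k) = P.coeff k := by
        intro k; rw [hα]; simp [Nat.mul_div_cancel_left]
      have hα2 : ∀ k : ℕ, α (2*k+1) = Q.coeff k := by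
        intro k; rw [hα]
        have h1 : (2*k+1) % 2 = 1 := by omega
        have h2 : (2*k+1) / 2 = k := by omega
        simp [h1, h2]
      rw [evalR2, hdiv]
      rw [Polynomial.eval_eq_sum_range' (lt_of_le_of_lt (le_max_left P.natDegree Q.natDegree) (Nat.lt_succ_self n)),
        Polynomial.eval_eq_sum_range' (lt_of_le_of_lt (le_max_right P.natDegree Q.natDegree) (Nat.lt_succ_self n))]
      rw [Finset.mul_sum, ← Finset.sum_add_distrib]
      refine Finset.sum_congr rfl (fun k _ => ?_)
      rw [hα1, hα2, hwt]
      ring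
    have e1 : ‖f z - (G x + H x * z)‖ ≤ ε/4 := hGH z hz
    have e2 : ‖G x - P.eval (t:ℂ)‖ < ε/4 := by
      have := hP t htI; rwa [hst] at this
    have e3 : ‖H x - Q.eval (t:ℂ)‖ < ε/(4*(M+1)) := by
      have := hQ t htI; rwa [hst] at this
    have e4 : ‖z * (H x - Q.eval (t:ℂ))‖ ≤ ε/4 := by
      rw [norm_mul]
      calc ‖z‖ * ‖H x - Q.eval (t:ℂ)‖
          ≤ M * (ε/(4*(M+1))) := by
            apply mul_le_mul (hM z hz) e3.le (norm_nonneg _) hM0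
        _ ≤ ε/4 := by
            have hM1 : M + 1 ≠ 0 := by positivity
            calc M * (ε/(4*(M+1))) = ε/4 * (M/(M+1)) := by field_simp
              _ ≤ ε/4 * 1 := by
                  apply mul_le_mul_of_nonneg_left _ (by positivity)
                  exact (div_le_one (by positivity)).2 (by linarith)
              _ = ε/4 := mul_one _
    have hdecomp : f z - evalR2 (2*n+1) α z =
        (f z - (G x + H x * z)) + (G x - P.eval (t:ℂ)) + z * (H x - Q.eval (t:ℂ)) := by
      rw [heval]; ring
    calc ‖f z - evalR2 (2*n+1) α z‖
        ≤ ‖f z - (G x + H x * z)‖ + ‖G x - P.eval (t:ℂ)‖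
          + ‖z * (H x - Q.eval (t:ℂ))‖ := by
          rw [hdecomp]
          exact (norm_add_le _ _).trans (add_le_add_left (norm_add_le _ _) _)
      _ < ε := by linarith
end

section
/- Let D ∈ ℂ^{n×n} be a diagonal matrix with diagonal entries λ₁, …, λ_n and let r ∈ ℝ^n. For a polynomial p ∈ P_j(r2) with coefficients α_k, define the vector p(Dτ)r = Σ_{k=0}^{⌊j/2⌋} (α_{2k} I + α_{2k+1} D)(D D̄)^k r, where D̄ is the entrywise conjugate of D. Then for all p, q ∈ P_j(r2), the standard Euclidean inner product satisfies ⟨p(Dτ)r, q(Dτ)r⟩ = Σ_{k=1}^n p(λ_k) · conj(q(λ_k)) · r_k². -/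
/-- The vector `p(Dτ)r = ∑_{k=0}^{⌊j/2⌋} (α_{2k} I + α_{2k+1} D)(D D̄)^k r`. -/
noncomputable def polyApply {n : ℕ} (j : ℕ) (α : ℕ → ℂ)
    (D : Matrix (Fin n) (Fin n) ℂ) (r : Fin n → ℝ) : Fin n → ℂ :=
  (∑ k ∈ Finset.range (j / 2 + 1),
      (α (2 * k) • (1 : Matrix (Fin n) (Fin n) ℂ) + α (2 * k + 1) • D) *
        (D * D.map (starRingEnd ℂ)) ^ k).mulVec fun i => (r i : ℂ)

set_option linter.unusedVariables false

lemma polyApply_diag {n : ℕ} (j : ℕ) (α : ℕ → ℂ) (lam : Fin n → ℂ) (r : Fin n → ℝ) (i : Fin n) :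
    polyApply j α (Matrix.diagonal lam) r i = evalR2 j α (lam i) * r i := by
  unfold polyApply evalR2
  have hmap : (Matrix.diagonal lam).map (starRingEnd ℂ)
      = Matrix.diagonal (fun i => (starRingEnd ℂ) (lam i)) := by
    rw [Matrix.diagonal_map (map_zero _)]
  rw [hmap, Matrix.diagonal_mul_diagonal]
  have habs : ∀ k, ∀ z : ℂ, (z * (starRingEnd ℂ) z) ^ k = ((‖z‖ : ℂ)) ^ (2 * k) := by
    intro k z
    rw [Complex.mul_conj]
    norm_cast
    rw [pow_mul, Complex.sq_norm]
  simp only [Matrix.diagonal_pow]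
  rw [show ((∑ k ∈ Finset.range (j / 2 + 1),
      (α (2 * k) • (1 : Matrix (Fin n) (Fin n) ℂ) + α (2 * k + 1) • Matrix.diagonal lam) *
        Matrix.diagonal ((fun i => lam i * (starRingEnd ℂ) (lam i)) ^ k)).mulVec fun i => (r i : ℂ))
    = ∑ k ∈ Finset.range (j / 2 + 1),
      ((α (2 * k) • (1 : Matrix (Fin n) (Fin n) ℂ) + α (2 * k + 1) • Matrix.diagonal lam) *
        Matrix.diagonal ((fun i => lam i * (starRingEnd ℂ) (lam i)) ^ k)).mulVec fun i => (r i : ℂ)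
    from map_sum (Matrix.mulVec.addMonoidHomLeft (fun i => (r i : ℂ)) : Matrix (Fin n) (Fin n) ℂ →+ (Fin n → ℂ)) _ _, Finset.sum_apply, Finset.sum_mul]
  refine Finset.sum_congr rfl fun k _ => ?_
  rw [Matrix.add_mul, Matrix.smul_mul, Matrix.smul_mul, Matrix.one_mul,
    Matrix.diagonal_mul_diagonal, Matrix.add_mulVec, Matrix.smul_mulVec,
    Matrix.smul_mulVec]
  simp only [Pi.add_apply, Pi.smul_apply, Matrix.mulVec_diagonal, smul_eq_mul, Pi.pow_apply]
  rw [← habs k (lam i)]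
  ring

/-- For a diagonal `D` with diagonal entries `λ_1, …, λ_n` and a real vector `r`,
`⟨p(Dτ)r, q(Dτ)r⟩ = ∑_k p(λ_k) conj(q(λ_k)) r_k²` for all `p, q ∈ P_j(r2)`. -/
theorem inner_polyApply {n : ℕ} (j : ℕ) (lam : Fin n → ℂ) (r : Fin n → ℝ)
    (α β : ℕ → ℂ) (hα : ∀ k, j < k → α k = 0) (hβ : ∀ k, j < k → β k = 0) :
    ∑ i, polyApply j α (Matrix.diagonal lam) r i *
        (starRingEnd ℂ) (polyApply j β (Matrix.diagonal lam) r i) =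
      ∑ i, evalR2 j α (lam i) * (starRingEnd ℂ) (evalR2 j β (lam i)) * ((r i : ℂ)) ^ 2 := by
  refine Finset.sum_congr rfl fun i _ => ?_
  rw [polyApply_diag, polyApply_diag, map_mul, Complex.conj_ofReal]
  ring
end
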